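/- Suppose P : [0, ∞) → ℝ^{n×n} solves the continuous Riccati equation Ṗ = AP + PAᵀ - PCᵀQCP + V on an interval [0, T), with P(0) symmetric positive definite and A, C continuous and Q(t), V(t) continuous symmetric positive definite. Then P(t) remains symmetric positive definite for all t ∈ [0, T). -/

import Mathlib

open Matrix Set Filter Metric
open scoped Matrix Topology

attribute [local instance] Matrix.normedAddCommGroup Matrix.normedSpace

namespace RiccatiAux

lemma norm_matmul_le {l p q : Type*} [Fintype l] [Fintype p] [Fintype q]
    (M : Matrix l p ℝ) (N : Matrix p q ℝ) :
    ‖M * N‖ ≤ (Fintype.card p : ℝ) * ‖M‖ * ‖N‖ := by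
  rw [Matrix.norm_le_iff (by positivity)]
  intro i j
  rw [Matrix.mul_apply]
  calc ‖∑ k, M i k * N k j‖ ≤ ∑ _k : p, ‖M‖ * ‖N‖ := by
        refine (norm_sum_le _ _).trans (Finset.sum_le_sum fun k _ => ?_)
        rw [norm_mul]
        exact mul_le_mul (Matrix.norm_entry_le_entrywise_sup_norm M)
          (Matrix.norm_entry_le_entrywise_sup_norm N) (norm_nonneg _) (norm_nonneg _)
    _ = (Fintype.card p : ℝ) * ‖M‖ * ‖N‖ := by
        simp [Finset.sum_const, Finset.card_univ, mul_assoc]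

lemma norm_matmul_le' {a b c : ℕ} (M : Matrix (Fin a) (Fin b) ℝ) (N : Matrix (Fin b) (Fin c) ℝ) :
    ‖M * N‖ ≤ (b : ℝ) * ‖M‖ * ‖N‖ := by
  simpa using norm_matmul_le M N

variable {n : ℕ}

lemma hasDerivAt_transpose {P : ℝ → Matrix (Fin n) (Fin n) ℝ}
    {P' : Matrix (Fin n) (Fin n) ℝ} {t : ℝ} (h : HasDerivAt P P' t) :
    HasDerivAt (fun s => (P s)ᵀ) P'ᵀ t := by
  have := ((Matrix.transposeLinearEquiv (Fin n) (Fin n) ℝ ℝ).toLinearMap.toContinuousLinearMap).hasFDerivAt.comp_hasDerivAt t h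
  exact this

def qlin (x : Fin n → ℝ) : Matrix (Fin n) (Fin n) ℝ →ₗ[ℝ] ℝ where
  toFun M := x ⬝ᵥ M *ᵥ x
  map_add' M N := by simp [Matrix.add_mulVec]
  map_smul' c M := by simp [Matrix.smul_mulVec]

lemma hasDerivAt_quadform {P : ℝ → Matrix (Fin n) (Fin n) ℝ}
    {P' : Matrix (Fin n) (Fin n) ℝ} {t : ℝ} (h : HasDerivAt P P' t) (x : Fin n → ℝ) :
    HasDerivAt (fun s => x ⬝ᵥ P s *ᵥ x) (x ⬝ᵥ P' *ᵥ x) t := by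
  have := ((qlin x).toContinuousLinearMap).hasFDerivAt.comp_hasDerivAt t h
  exact this

lemma continuous_quadform :
    Continuous (fun q : (Matrix (Fin n) (Fin n) ℝ) × (Fin n → ℝ) => q.2 ⬝ᵥ q.1 *ᵥ q.2) := by
  simp only [dotProduct, Matrix.mulVec]
  refine continuous_finset_sum _ fun i _ => ((continuous_apply i).comp continuous_snd).mul ?_
  refine continuous_finset_sum _ fun j _ => ?_
  exact (((continuous_apply j).comp ((continuous_apply i).comp continuous_fst)).mul
    ((continuous_apply j).comp continuous_snd))

end RiccatiAux


/-- solutions of the continuous Riccati equation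
`Ṗ = AP + PAᵀ - PCᵀQCP + V` with `P(0)` symmetric positive definite and
`Q(t), V(t)` continuous symmetric positive definite remain symmetric positive
definite on `[0, T)`. -/
theorem riccati_posdef (n m : ℕ) (T : ℝ) (hT : 0 < T)
    (A : ℝ → Matrix (Fin n) (Fin n) ℝ)
    (C : ℝ → Matrix (Fin m) (Fin n) ℝ)
    (Q : ℝ → Matrix (Fin m) (Fin m) ℝ)
    (V : ℝ → Matrix (Fin n) (Fin n) ℝ)
    (P : ℝ → Matrix (Fin n) (Fin n) ℝ)
    (hA : Continuous A) (hC : Continuous C) (hQ : Continuous Q) (hV : Continuous V)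
    (hQpd : ∀ t, (Q t)ᵀ = Q t ∧ (Q t).PosDef)
    (hVpd : ∀ t, (V t)ᵀ = V t ∧ (V t).PosDef)
    (hP0 : (P 0)ᵀ = P 0 ∧ (P 0).PosDef)
    (hode : ∀ t ∈ Set.Ico (0 : ℝ) T, HasDerivAt P
        (A t * P t + P t * (A t)ᵀ - P t * (C t)ᵀ * Q t * C t * P t + V t) t) :
    ∀ t ∈ Set.Ico (0 : ℝ) T, (P t)ᵀ = P t ∧ (P t).PosDef := by
  have hPc : ∀ t ∈ Ico (0:ℝ) T, ContinuousAt P t := fun t ht => (hode t ht).continuousAt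
  set G : ℝ → Matrix (Fin n) (Fin n) ℝ := fun t => (C t)ᵀ * Q t * C t with hGdef
  have hGc : Continuous G := (hC.matrix_transpose.matrix_mul hQ).matrix_mul hC
  have hGsymm : ∀ t, (G t)ᵀ = G t := fun t => by
    simp [hGdef, Matrix.transpose_mul, Matrix.mul_assoc, (hQpd t).1]
  set D : ℝ → Matrix (Fin n) (Fin n) ℝ := fun t => P t - (P t)ᵀ with hDdef
  have hD' : ∀ t ∈ Ico (0:ℝ) T, HasDerivAt D
      ((A t * P t + P t * (A t)ᵀ - P t * (C t)ᵀ * Q t * C t * P t + V t)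
        - (A t * P t + P t * (A t)ᵀ - P t * (C t)ᵀ * Q t * C t * P t + V t)ᵀ) t :=
    fun t ht => (hode t ht).sub (RiccatiAux.hasDerivAt_transpose (hode t ht))
  have hE : ∀ t, (A t * P t + P t * (A t)ᵀ - P t * (C t)ᵀ * Q t * C t * P t + V t)
        - (A t * P t + P t * (A t)ᵀ - P t * (C t)ᵀ * Q t * C t * P t + V t)ᵀ
      = A t * D t + D t * (A t)ᵀ - (P t * G t) * D t - D t * (G t * (P t)ᵀ) := by
    intro t
    simp only [hGdef, hDdef]
    simp only [Matrix.transpose_add, Matrix.transpose_sub, Matrix.transpose_mul,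
      Matrix.transpose_transpose, (hQpd t).1, (hVpd t).1]
    simp only [Matrix.mul_sub, Matrix.sub_mul, Matrix.mul_assoc]
    abel
  -- Stage 1: symmetry
  have hsymm : ∀ t ∈ Ico (0:ℝ) T, (P t)ᵀ = P t := by
    intro b hb
    have hsub : Icc (0:ℝ) b ⊆ Ico 0 T := fun s hs => ⟨hs.1, lt_of_le_of_lt hs.2 hb.2⟩
    have hPcOn : ContinuousOn P (Icc 0 b) := fun s hs => (hPc s (hsub hs)).continuousWithinAt
    have hPtOn : ContinuousOn (fun s => (P s)ᵀ) (Icc 0 b) :=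
      (continuous_id.matrix_transpose).comp_continuousOn hPcOn
    have hDcOn : ContinuousOn D (Icc 0 b) := hPcOn.sub hPtOn
    -- bounds on coefficients
    obtain ⟨Ka, hKa⟩ := isCompact_Icc.exists_bound_of_continuousOn
      (hA.continuousOn : ContinuousOn A (Icc (0:ℝ) b))
    obtain ⟨Kg, hKg⟩ := isCompact_Icc.exists_bound_of_continuousOn
      (hGc.continuousOn : ContinuousOn G (Icc (0:ℝ) b))
    obtain ⟨Kp, hKp⟩ := isCompact_Icc.exists_bound_of_continuousOn hPcOn
    have hKa0 : 0 ≤ Ka := le_trans (norm_nonneg _) (hKa 0 ⟨le_refl _, hb.1⟩)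
    have hKg0 : 0 ≤ Kg := le_trans (norm_nonneg _) (hKg 0 ⟨le_refl _, hb.1⟩)
    have hKp0 : 0 ≤ Kp := le_trans (norm_nonneg _) (hKp 0 ⟨le_refl _, hb.1⟩)
    set K : ℝ := (n:ℝ)*Ka + (n:ℝ)*Ka + (n:ℝ)*((n:ℝ)*Kp*Kg) + (n:ℝ)*((n:ℝ)*Kg*Kp) with hKdef
    have hbound : ∀ s ∈ Ico (0:ℝ) b,
        ‖(A s * P s + P s * (A s)ᵀ - P s * (C s)ᵀ * Q s * C s * P s + V s)
          - (A s * P s + P s * (A s)ᵀ - P s * (C s)ᵀ * Q s * C s * P s + V s)ᵀ‖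
        ≤ K * ‖D s‖ + 0 := by
      intro s hs
      have hs' : s ∈ Icc (0:ℝ) b := ⟨hs.1, le_of_lt hs.2⟩
      rw [hE s]
      have b1 : ‖A s * D s‖ ≤ ((n:ℝ)*Ka)*‖D s‖ := by
        refine (RiccatiAux.norm_matmul_le' _ _).trans ?_
        gcongr
        exact hKa s hs'
      have b2 : ‖D s * (A s)ᵀ‖ ≤ ((n:ℝ)*Ka)*‖D s‖ := by
        refine (RiccatiAux.norm_matmul_le' _ _).trans ?_
        rw [Matrix.norm_transpose]
        calc (n:ℝ) * ‖D s‖ * ‖A s‖ ≤ (n:ℝ) * ‖D s‖ * Ka := by gcongr; exact hKa s hs'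
          _ = ((n:ℝ)*Ka)*‖D s‖ := by ring
      have b3 : ‖(P s * G s) * D s‖ ≤ ((n:ℝ)*((n:ℝ)*Kp*Kg))*‖D s‖ := by
        refine (RiccatiAux.norm_matmul_le' _ _).trans ?_
        have h3 : ‖P s * G s‖ ≤ (n:ℝ)*Kp*Kg := by
          refine (RiccatiAux.norm_matmul_le' _ _).trans ?_
          gcongr
          · exact hKp s hs'
          · exact hKg s hs'
        calc (n:ℝ) * ‖P s * G s‖ * ‖D s‖ ≤ (n:ℝ) * ((n:ℝ)*Kp*Kg) * ‖D s‖ := by gcongr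
          _ = ((n:ℝ)*((n:ℝ)*Kp*Kg))*‖D s‖ := by ring
      have b4 : ‖D s * (G s * (P s)ᵀ)‖ ≤ ((n:ℝ)*((n:ℝ)*Kg*Kp))*‖D s‖ := by
        refine (RiccatiAux.norm_matmul_le' _ _).trans ?_
        have h4 : ‖G s * (P s)ᵀ‖ ≤ (n:ℝ)*Kg*Kp := by
          refine (RiccatiAux.norm_matmul_le' _ _).trans ?_
          rw [Matrix.norm_transpose]
          gcongr
          · exact hKg s hs'
          · exact hKp s hs'
        calc (n:ℝ) * ‖D s‖ * ‖G s * (P s)ᵀ‖ ≤ (n:ℝ) * ‖D s‖ * ((n:ℝ)*Kg*Kp) := by gcongr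
          _ = ((n:ℝ)*((n:ℝ)*Kg*Kp))*‖D s‖ := by ring
      have tri : ‖A s * D s + D s * (A s)ᵀ - (P s * G s) * D s - D s * (G s * (P s)ᵀ)‖
          ≤ ‖A s * D s‖ + ‖D s * (A s)ᵀ‖ + ‖(P s * G s) * D s‖ + ‖D s * (G s * (P s)ᵀ)‖ := by
        have t1 := norm_sub_le (A s * D s + D s * (A s)ᵀ - (P s * G s) * D s) (D s * (G s * (P s)ᵀ))
        have t2 := norm_sub_le (A s * D s + D s * (A s)ᵀ) ((P s * G s) * D s)
        have t3 := norm_add_le (A s * D s) (D s * (A s)ᵀ)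
        linarith
      rw [hKdef]
      have := tri.trans (by linarith : ‖A s * D s‖ + ‖D s * (A s)ᵀ‖ + ‖(P s * G s) * D s‖
        + ‖D s * (G s * (P s)ᵀ)‖ ≤ ((n:ℝ)*Ka + (n:ℝ)*Ka + (n:ℝ)*((n:ℝ)*Kp*Kg)
          + (n:ℝ)*((n:ℝ)*Kg*Kp)) * ‖D s‖)
      linarith
    have hD0 : ‖D 0‖ ≤ 0 := by
      have : D 0 = 0 := by simp [hDdef, hP0.1]
      simp [this]
    have hgron := norm_le_gronwallBound_of_norm_deriv_right_le hDcOn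
      (fun s hs => (hD' s ⟨hs.1, lt_trans hs.2 hb.2⟩).hasDerivWithinAt) hD0 hbound
    have hDb : D b = 0 := by
      have h := hgron b ⟨hb.1, le_refl b⟩
      rw [gronwallBound_ε0_δ0] at h
      exact norm_le_zero_iff.mp h
    have hsub0 : P b - (P b)ᵀ = 0 := by simpa [hDdef] using hDb
    have := sub_eq_zero.mp hsub0
    exact this.symm
  -- Stage 2: positive definiteness
  have key : ∀ s ∈ Ico (0:ℝ) T, ∀ x : Fin n → ℝ, x ≠ 0 → 0 < x ⬝ᵥ P s *ᵥ x := by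
    by_contra hcon
    push_neg at hcon
    obtain ⟨t₀, ht₀, x₀, hx₀ne, hx₀⟩ := hcon
    have hnorm : ∀ (s : ℝ) (y : Fin n → ℝ), y ≠ 0 → y ⬝ᵥ P s *ᵥ y ≤ 0 →
        ∃ u : Fin n → ℝ, ‖u‖ = 1 ∧ u ⬝ᵥ P s *ᵥ u ≤ 0 := by
      intro s y hy hle
      refine ⟨(‖y‖⁻¹ : ℝ) • y, norm_smul_inv_norm hy, ?_⟩
      have heq : ((‖y‖⁻¹ : ℝ) • y) ⬝ᵥ P s *ᵥ ((‖y‖⁻¹ : ℝ) • y)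
          = ‖y‖⁻¹ * (‖y‖⁻¹ * (y ⬝ᵥ P s *ᵥ y)) := by
        simp [Matrix.mulVec_smul, smul_dotProduct, dotProduct_smul, smul_eq_mul]
      rw [heq]
      have h1 : (0:ℝ) ≤ ‖y‖⁻¹ := by positivity
      nlinarith [mul_nonneg h1 h1]
    set K2 : Set (ℝ × (Fin n → ℝ)) := (Icc 0 t₀) ×ˢ (sphere (0 : Fin n → ℝ) 1) with hK2def
    have hK2c : IsCompact K2 := isCompact_Icc.prod (isCompact_sphere 0 1)
    have hfc : ContinuousOn (fun p : ℝ × (Fin n → ℝ) => p.2 ⬝ᵥ P p.1 *ᵥ p.2) K2 := by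
      intro p hp
      have hPa : ContinuousAt P p.1 := hPc p.1 ⟨hp.1.1, lt_of_le_of_lt hp.1.2 ht₀.2⟩
      have hg : ContinuousAt (fun p : ℝ × (Fin n → ℝ) => (P p.1, p.2)) p :=
        (hPa.comp continuousAt_fst).prodMk continuousAt_snd
      exact (RiccatiAux.continuous_quadform.continuousAt.comp hg).continuousWithinAt
    set SS : Set (ℝ × (Fin n → ℝ)) :=
      K2 ∩ (fun p : ℝ × (Fin n → ℝ) => p.2 ⬝ᵥ P p.1 *ᵥ p.2) ⁻¹' (Iic 0) with hSSdef
    have hK2closed : IsClosed K2 := isClosed_Icc.prod Metric.isClosed_sphere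
    have hSSclosed : IsClosed SS := hfc.preimage_isClosed_of_isClosed hK2closed isClosed_Iic
    have hSSc : IsCompact SS := hK2c.of_isClosed_subset hSSclosed inter_subset_left
    obtain ⟨u₀, hu₀1, hu₀2⟩ := hnorm t₀ x₀ hx₀ne hx₀
    have hmemSS : (t₀, u₀) ∈ SS :=
      ⟨⟨⟨ht₀.1, le_refl t₀⟩, by simpa [mem_sphere_zero_iff_norm] using hu₀1⟩, hu₀2⟩
    set AS : Set ℝ := Prod.fst '' SS with hASdef
    have hASc : IsCompact AS := hSSc.image continuous_fst
    have hASne : AS.Nonempty := ⟨t₀, ⟨(t₀, u₀), hmemSS, rfl⟩⟩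
    have htsmem := hASc.sInf_mem hASne
    obtain ⟨⟨ts, xs⟩, hmem, hfst⟩ := htsmem
    have hxs_unit : ‖xs‖ = 1 := by
      have := hmem.1.2
      simpa [mem_sphere_zero_iff_norm] using this
    have hne : xs ≠ 0 := by
      intro h; rw [h] at hxs_unit; simp at hxs_unit
    have hts_le : xs ⬝ᵥ P ts *ᵥ xs ≤ 0 := hmem.2
    have hts_mem : ts ∈ Icc (0:ℝ) t₀ := hmem.1.1
    have htsT : ts ∈ Ico (0:ℝ) T := ⟨hts_mem.1, lt_of_le_of_lt hts_mem.2 ht₀.2⟩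
    have posBefore : ∀ s ∈ Ico (0:ℝ) ts, ∀ y : Fin n → ℝ, y ≠ 0 → 0 < y ⬝ᵥ P s *ᵥ y := by
      intro s hs y hy
      by_contra hle
      push_neg at hle
      obtain ⟨u, hu1, hu2⟩ := hnorm s y hy hle
      have hsAS : s ∈ AS := ⟨(s, u),
        ⟨⟨⟨hs.1, le_trans (le_of_lt hs.2) hts_mem.2⟩,
          by simpa [mem_sphere_zero_iff_norm] using hu1⟩, hu2⟩, rfl⟩
      have hinf : sInf AS ≤ s := csInf_le hASc.bddBelow hsAS
      rw [← hfst] at hinf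
      exact absurd hinf (not_le.mpr hs.2)
    have htspos : 0 < ts := by
      rcases lt_or_eq_of_le hts_mem.1 with h | h
      · exact h
      · exfalso
        have := (Matrix.posDef_iff_dotProduct_mulVec.mp hP0.2).2 hne
        rw [star_trivial] at this
        rw [← h] at hts_le
        linarith
    have nonnegAt : ∀ y : Fin n → ℝ, 0 ≤ y ⬝ᵥ P ts *ᵥ y := by
      intro y
      rcases eq_or_ne y 0 with rfl | hy
      · simp
      · have hcont : ContinuousAt (fun s => y ⬝ᵥ P s *ᵥ y) ts := by
          have hg : ContinuousAt (fun s : ℝ => (P s, y)) ts :=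
            (hPc ts htsT).prodMk continuousAt_const
          exact RiccatiAux.continuous_quadform.continuousAt.comp hg
        have htb : Tendsto (fun s => y ⬝ᵥ P s *ᵥ y) (𝓝[<] ts) (𝓝 (y ⬝ᵥ P ts *ᵥ y)) :=
          hcont.tendsto.mono_left nhdsWithin_le_nhds
        refine ge_of_tendsto htb ?_
        filter_upwards [Ioo_mem_nhdsLT_of_mem ⟨htspos, le_refl ts⟩] with s hsm
        exact le_of_lt (posBefore s ⟨le_of_lt hsm.1, hsm.2⟩ y hy)
    have hzero : xs ⬝ᵥ P ts *ᵥ xs = 0 := le_antisymm hts_le (nonnegAt xs)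
    have hherm : (P ts).IsHermitian := by
      show (P ts)ᴴ = P ts
      rw [Matrix.conjTranspose_eq_transpose_of_trivial]
      exact hsymm ts htsT
    have hpsd : (P ts).PosSemidef := Matrix.posSemidef_iff_dotProduct_mulVec.mpr ⟨hherm, fun y => by rw [star_trivial]; exact nonnegAt y⟩
    have hPxs : P ts *ᵥ xs = 0 := by
      refine (hpsd.dotProduct_mulVec_zero_iff xs).mp ?_
      rw [star_trivial]; exact hzero
    have hvm : xs ᵥ* P ts = 0 := by
      have h := Matrix.mulVec_transpose (P ts) xs
      rw [hsymm ts htsT] at h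
      rw [← h, hPxs]
    have hg' := RiccatiAux.hasDerivAt_quadform (hode ts htsT) xs
    have hval : xs ⬝ᵥ (A ts * P ts + P ts * (A ts)ᵀ
        - P ts * (C ts)ᵀ * Q ts * C ts * P ts + V ts) *ᵥ xs = xs ⬝ᵥ V ts *ᵥ xs := by
      have e1 : (A ts * P ts) *ᵥ xs = 0 := by
        rw [← Matrix.mulVec_mulVec, hPxs, Matrix.mulVec_zero]
      have e3 : (P ts * (C ts)ᵀ * Q ts * C ts * P ts) *ᵥ xs = 0 := by
        rw [← Matrix.mulVec_mulVec, hPxs, Matrix.mulVec_zero]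
      have e2 : xs ⬝ᵥ (P ts * (A ts)ᵀ) *ᵥ xs = 0 := by
        rw [← Matrix.mulVec_mulVec, Matrix.dotProduct_mulVec, hvm, zero_dotProduct]
      simp [Matrix.add_mulVec, Matrix.sub_mulVec, e1, e3, e2, dotProduct_add, dotProduct_sub]
    rw [hval] at hg'
    have hpos : 0 < xs ⬝ᵥ V ts *ᵥ xs := by
      have := (Matrix.posDef_iff_dotProduct_mulVec.mp (hVpd ts).2).2 hne
      rwa [star_trivial] at this
    have hslope := hasDerivAt_iff_tendsto_slope.mp hg'
    have hsl : Tendsto (slope (fun s => xs ⬝ᵥ P s *ᵥ xs) ts) (𝓝[<] ts)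
        (𝓝 (xs ⬝ᵥ V ts *ᵥ xs)) :=
      hslope.mono_left (nhdsWithin_mono _ fun y hy => ne_of_lt hy)
    have hev1 : ∀ᶠ s in 𝓝[<] ts, 0 < slope (fun s => xs ⬝ᵥ P s *ᵥ xs) ts s :=
      hsl.eventually (eventually_gt_nhds hpos)
    have hev2 : ∀ᶠ s in 𝓝[<] ts, s ∈ Ioo (0:ℝ) ts :=
      eventually_of_mem (Ioo_mem_nhdsLT_of_mem ⟨htspos, le_refl ts⟩) fun x hx => hx
    obtain ⟨s, hs1, hs2⟩ := (hev1.and hev2).exists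
    have hgs : 0 < xs ⬝ᵥ P s *ᵥ xs := posBefore s ⟨le_of_lt hs2.1, hs2.2⟩ xs hne
    have hsl_eq : slope (fun s => xs ⬝ᵥ P s *ᵥ xs) ts s
        = (xs ⬝ᵥ P s *ᵥ xs) / (s - ts) := by
      rw [slope_def_field]
      rw [hzero]
      ring
    rw [hsl_eq] at hs1
    have hneg : (xs ⬝ᵥ P s *ᵥ xs) / (s - ts) < 0 :=
      div_neg_of_pos_of_neg hgs (by linarith [hs2.2])
    linarith
  intro t ht
  refine ⟨hsymm t ht, Matrix.posDef_iff_dotProduct_mulVec.mpr ⟨?_, ?_⟩⟩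
  · show (P t)ᴴ = P t
    rw [Matrix.conjTranspose_eq_transpose_of_trivial]
    exact hsymm t ht
  · intro x hx
    rw [star_trivial]
    exact key t ht x hx
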